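/- arXiv:1810.05601 — 2 statements merged into one kernel-verified Lean document; each statement's English description precedes it below -/
import Mathlib

section
/- Let (ν_n) be a sequence of Borel probability measures on a compact metric space M, each absolutely continuous with respect to a reference probability measure vol, with densities f_n = dν_n/dvol ≥ 0. Suppose ν_n converges weakly to a probability measure ν and write ν = ν_c + ν_s for the Lebesgue decomposition of ν with respect to vol. Suppose further that the push-forward measures τ_n = (f_n)_* ν_n on [0,∞], i.e. τ_n(A) = ν_n(f_n^{-1}(A)), satisfy lim_{K→∞} liminf_{n→∞} τ_n([K,∞]) = 0. Then ν_s = 0, i.e. ν is absolutely continuous with respect to vol. -/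
open MeasureTheory Filter Topology
open scoped ENNReal

/-- Density bound: for `ν = f·vol`, `ν G ≤ K · vol G + ν {K ≤ f}`. -/
lemma density_split_bound {M : Type*} [MeasurableSpace M]
    (vol : Measure M) (f : M → ℝ≥0∞) (hf : Measurable f)
    {G : Set M} (hG : MeasurableSet G) (K : ℝ≥0∞) :
    vol.withDensity f G ≤ K * vol G + vol.withDensity f {x | K ≤ f x} := by
  have hA : MeasurableSet {x | K ≤ f x} := hf measurableSet_Ici
  calc vol.withDensity f G
      = vol.withDensity f (G \ {x | K ≤ f x})
        + vol.withDensity f (G ∩ {x | K ≤ f x}) := by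
        rw [add_comm, measure_inter_add_diff G hA]
    _ ≤ K * vol G + vol.withDensity f {x | K ≤ f x} := by
        gcongr
        · rw [withDensity_apply f (hG.diff hA)]
          calc ∫⁻ x in G \ {x | K ≤ f x}, f x ∂vol
              ≤ ∫⁻ _ in G \ {x | K ≤ f x}, K ∂vol := by
                refine setLIntegral_mono' (hG.diff hA) fun x hx => ?_
                exact le_of_lt (not_le.mp hx.2)
            _ = K * vol (G \ {x | K ≤ f x}) := setLIntegral_const _ _
            _ ≤ K * vol G := mul_le_mul' le_rfl (measure_mono Set.diff_subset)
        · exact Set.inter_subset_right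

/-- If probability measures `νₙ = fₙ·vol` converge weakly to `ν` and the
distributions `τₙ = (fₙ)_* νₙ` of the density values satisfy
`lim_{K→∞} liminf_n τₙ([K,∞]) = 0` (no mass escapes to infinity), then the
singular part of `ν` with respect to `vol` vanishes, i.e. `ν ≪ vol`. -/
theorem no_escape_implies_absolutely_continuous
    {M : Type*} [MetricSpace M] [CompactSpace M]
    [MeasurableSpace M] [BorelSpace M]
    (vol : Measure M) [IsProbabilityMeasure vol]
    (νs : ℕ → ProbabilityMeasure M) (ν : ProbabilityMeasure M)
    (f : ℕ → M → ℝ≥0∞) (hf : ∀ n, Measurable (f n))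
    (hdens : ∀ n, (νs n : Measure M) = vol.withDensity (f n))
    (hconv : Tendsto νs atTop (𝓝 ν))
    (τ : ℕ → Measure ℝ≥0∞)
    (hτ : ∀ n, τ n = Measure.map (f n) (νs n : Measure M))
    (hescape : Tendsto
      (fun K : ℕ => atTop.liminf (fun n => τ n (Set.Ici (K : ℝ≥0∞))))
      atTop (𝓝 0)) :
    (ν : Measure M).singularPart vol = 0 := by
  -- It suffices to prove absolute continuity.
  refine Measure.singularPart_eq_zero_of_ac ?_
  refine Measure.AbsolutelyContinuous.mk fun s hs hvs => ?_
  -- Key step: every closed set of vol-measure zero is ν-null.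
  have key : ∀ F : Set M, IsClosed F → vol F = 0 → (ν : Measure M) F = 0 := by
    intro F hFc hvF
    refine le_antisymm ?_ zero_le
    refine ENNReal.le_of_forall_pos_le_add fun ε hε _ => ?_
    rw [zero_add]
    have hε2 : (0 : ℝ≥0∞) < (ε : ℝ≥0∞) / 2 :=
      ENNReal.div_pos (by exact_mod_cast hε.ne') ENNReal.ofNat_ne_top
    -- choose K with liminf τₙ [K,∞] < ε/2
    obtain ⟨K, hK⟩ : ∃ K : ℕ,
        atTop.liminf (fun n => τ n (Set.Ici (K : ℝ≥0∞))) < ε / 2 := by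
      have := hescape.eventually (gt_mem_nhds hε2)
      exact this.exists
    -- choose an open set G ⊇ F with small vol-measure
    set δ : ℝ≥0∞ := (ε / 2) / (K + 1) with hδdef
    have hδ : 0 < δ := by
      refine ENNReal.div_pos (ne_of_gt hε2) ?_
      exact (ENNReal.add_lt_top.mpr ⟨ENNReal.natCast_lt_top K, ENNReal.one_lt_top⟩).ne
    obtain ⟨G, hFG, hGo, hGv⟩ : ∃ G ⊇ F, IsOpen G ∧ vol G < δ :=
      F.exists_isOpen_lt_of_lt δ (by rw [hvF]; exact hδ)
    -- portmanteau bound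
    have h1 : (ν : Measure M) G ≤ atTop.liminf fun n => (νs n : Measure M) G :=
      ProbabilityMeasure.le_liminf_measure_open_of_tendsto hconv hGo
    -- pointwise bound for each n
    have h2 : ∀ n, (νs n : Measure M) G
        ≤ (K : ℝ≥0∞) * vol G + τ n (Set.Ici (K : ℝ≥0∞)) := by
      intro n
      rw [hdens n, hτ n, Measure.map_apply (hf n) measurableSet_Ici, hdens n]
      have : f n ⁻¹' Set.Ici (K : ℝ≥0∞) = {x | (K : ℝ≥0∞) ≤ f n x} := rfl
      rw [this]
      exact density_split_bound vol (f n) (hf n) hGo.measurableSet _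
    calc (ν : Measure M) F ≤ (ν : Measure M) G := measure_mono hFG
      _ ≤ atTop.liminf fun n => (νs n : Measure M) G := h1
      _ ≤ atTop.liminf fun n =>
            (K : ℝ≥0∞) * vol G + τ n (Set.Ici (K : ℝ≥0∞)) :=
          liminf_le_liminf (Eventually.of_forall h2)
      _ = (K : ℝ≥0∞) * vol G
            + atTop.liminf fun n => τ n (Set.Ici (K : ℝ≥0∞)) :=
          liminf_const_add atTop _ _ (by isBoundedDefault) (by isBoundedDefault)
      _ ≤ (ε : ℝ≥0∞) / 2 + (ε : ℝ≥0∞) / 2 := by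
          refine add_le_add ?_ hK.le
          calc (K : ℝ≥0∞) * vol G ≤ ((K : ℝ≥0∞) + 1) * δ :=
                mul_le_mul' le_self_add hGv.le
            _ = (ε : ℝ≥0∞) / 2 := by
                rw [hδdef, ENNReal.mul_div_cancel (by simp)
                  (ENNReal.add_lt_top.mpr ⟨ENNReal.natCast_lt_top K, ENNReal.one_lt_top⟩).ne]
      _ = ε := ENNReal.add_halves _
  -- use inner regularity by closed sets
  rw [hs.measure_eq_iSup_isClosed_of_ne_top (measure_ne_top _ s)]
  simp only [ENNReal.iSup_eq_zero]
  intro F hFs hFc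
  exact key F hFc (le_antisymm (hvs ▸ measure_mono hFs) zero_le)
end

section
/- Let (ν_n) be Borel probability measures on a compact metric space M with densities f_n ≥ 0 with respect to a probability measure vol, converging weakly to ν = ν_c + ν_s (Lebesgue decomposition with respect to vol), and let τ_n = (f_n)_* ν_n on [0,∞]. Then ν_s(M) ≤ lim_{K→∞} liminf_{n→∞} τ_n([K,∞]). -/
open MeasureTheory Filter Topology
open scoped ENNReal

/-- Mass-transport bound: if probability measures `νₙ = fₙ·vol` converge weakly
to `ν` and `τₙ = (fₙ)_* νₙ` are the distributions of the density values, then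
the singular part of `ν` with respect to `vol` satisfies
`νₛ(M) ≤ lim_{K→∞} liminf_n τₙ([K,∞])` (the limit over `K` of the antitone
sequence being its infimum). -/
theorem singular_mass_le_escaping_mass
    {M : Type*} [MetricSpace M] [CompactSpace M]
    [MeasurableSpace M] [BorelSpace M]
    (vol : Measure M) [IsProbabilityMeasure vol]
    (νs : ℕ → ProbabilityMeasure M) (ν : ProbabilityMeasure M)
    (f : ℕ → M → ℝ≥0∞) (hf : ∀ n, Measurable (f n))
    (hdens : ∀ n, (νs n : Measure M) = vol.withDensity (f n))
    (hconv : Tendsto νs atTop (𝓝 ν))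
    (τ : ℕ → Measure ℝ≥0∞)
    (hτ : ∀ n, τ n = Measure.map (f n) (νs n : Measure M)) :
    (ν : Measure M).singularPart vol Set.univ ≤
      ⨅ K : ℕ, atTop.liminf (fun n => τ n (Set.Ici (K : ℝ≥0∞))) := by
  refine le_iInf fun K => ?_
  set L : ℝ≥0∞ := atTop.liminf (fun n => τ n (Set.Ici (K : ℝ≥0∞))) with hL
  -- the liminf is at most 1
  have hLfin : L < ⊤ := by
    have hle1 : ∀ n, τ n (Set.Ici (K : ℝ≥0∞)) ≤ 1 := by
      intro n
      rw [hτ n]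
      calc Measure.map (f n) (νs n : Measure M) (Set.Ici (K : ℝ≥0∞))
          ≤ Measure.map (f n) (νs n : Measure M) Set.univ := measure_mono (Set.subset_univ _)
        _ ≤ (νs n : Measure M) Set.univ := by
            rw [Measure.map_apply (hf n) MeasurableSet.univ]
            exact measure_mono (Set.subset_univ _)
        _ = 1 := measure_univ
    have hL1 : L ≤ 1 :=
      le_of_le_of_eq (Filter.liminf_le_liminf (Filter.Eventually.of_forall hle1))
        (Filter.liminf_const 1)
    exact lt_of_le_of_lt hL1 ENNReal.one_lt_top
  -- singular part sits on a vol-null set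
  obtain ⟨s, hs, hsing, hvols⟩ :=
    Measure.mutuallySingular_singularPart (ν : Measure M) vol
  refine ENNReal.le_of_forall_pos_le_add fun ε hε _ => ?_
  set δ : ℝ≥0∞ := (ε : ℝ≥0∞) / (K + 1) with hδ
  have hK1 : ((K : ℝ≥0∞) + 1) ≠ ⊤ := by
    simp [ENNReal.add_eq_top]
  have hδpos : 0 < δ :=
    ENNReal.div_pos (by exact_mod_cast hε.ne') hK1
  -- open set U ⊇ sᶜ with vol U < δ
  obtain ⟨U, hsU, hUopen, hUvol⟩ :=
    Set.exists_isOpen_lt_of_lt sᶜ δ (by rw [hvols]; exact hδpos)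
  have key : (ν : Measure M).singularPart vol Set.univ ≤ (ν : Measure M) U := by
    calc (ν : Measure M).singularPart vol Set.univ
        = (ν : Measure M).singularPart vol (s ∪ sᶜ) := by rw [Set.union_compl_self]
      _ ≤ (ν : Measure M).singularPart vol s + (ν : Measure M).singularPart vol sᶜ :=
          measure_union_le _ _
      _ = (ν : Measure M).singularPart vol sᶜ := by rw [hsing, zero_add]
      _ ≤ (ν : Measure M).singularPart vol U := measure_mono hsU
      _ ≤ (ν : Measure M) U := (Measure.singularPart_le _ _) U
  have port : (ν : Measure M) U ≤ atTop.liminf fun n => (νs n : Measure M) U :=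
    MeasureTheory.ProbabilityMeasure.le_liminf_measure_open_of_tendsto hconv hUopen
  have hbound : ∀ n, (νs n : Measure M) U ≤ (K : ℝ≥0∞) * δ + τ n (Set.Ici (K : ℝ≥0∞)) := by
    intro n
    have hsplit : (νs n : Measure M) U ≤
        (νs n : Measure M) (U ∩ {x | f n x < K}) + (νs n : Measure M) {x | (K : ℝ≥0∞) ≤ f n x} := by
      refine le_trans (measure_mono ?_) (measure_union_le _ _)
      intro x hx
      by_cases h : f n x < K
      · exact Or.inl ⟨hx, h⟩
      · exact Or.inr (not_lt.mp h)
    have h1 : (νs n : Measure M) (U ∩ {x | f n x < K}) ≤ (K : ℝ≥0∞) * δ := by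
      rw [hdens n, withDensity_apply _ ((hUopen.measurableSet).inter
        (measurableSet_lt (hf n) measurable_const))]
      calc ∫⁻ x in U ∩ {x | f n x < K}, f n x ∂vol
          ≤ ∫⁻ _ in U ∩ {x | f n x < K}, (K : ℝ≥0∞) ∂vol := by
            apply setLIntegral_mono' ((hUopen.measurableSet).inter
              (measurableSet_lt (hf n) measurable_const))
            intro x hx
            exact le_of_lt hx.2
        _ = (K : ℝ≥0∞) * vol (U ∩ {x | f n x < K}) := by
            rw [setLIntegral_const, mul_comm]
        _ ≤ (K : ℝ≥0∞) * δ := by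
            exact mul_le_mul_right (le_of_lt (lt_of_le_of_lt
              (measure_mono Set.inter_subset_left) hUvol)) _
    have h2 : (νs n : Measure M) {x | (K : ℝ≥0∞) ≤ f n x} = τ n (Set.Ici (K : ℝ≥0∞)) := by
      rw [hτ n, Measure.map_apply (hf n) measurableSet_Ici]
      rfl
    calc (νs n : Measure M) U
        ≤ (νs n : Measure M) (U ∩ {x | f n x < K}) + (νs n : Measure M) {x | (K : ℝ≥0∞) ≤ f n x} :=
          hsplit
      _ ≤ (K : ℝ≥0∞) * δ + τ n (Set.Ici (K : ℝ≥0∞)) := by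
          rw [h2]; exact add_le_add_left h1 _
  have hliminf : atTop.liminf (fun n => (νs n : Measure M) U) ≤ (K : ℝ≥0∞) * δ + L := by
    calc atTop.liminf (fun n => (νs n : Measure M) U)
        ≤ atTop.liminf (fun n => (K : ℝ≥0∞) * δ + τ n (Set.Ici (K : ℝ≥0∞))) :=
          Filter.liminf_le_liminf (Filter.Eventually.of_forall hbound)
      _ = (K : ℝ≥0∞) * δ + L := by
          rw [hL]
          exact liminf_const_add atTop _ _
            (Filter.IsBoundedUnder.isCoboundedUnder_ge
              (Filter.isBoundedUnder_of ⟨⊤, fun _ => le_top⟩))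
            (Filter.isBoundedUnder_of ⟨0, fun _ => zero_le⟩)
  have hKδ : (K : ℝ≥0∞) * δ ≤ ε := by
    calc (K : ℝ≥0∞) * δ ≤ ((K : ℝ≥0∞) + 1) * δ :=
          mul_le_mul_left le_self_add _
      _ = ε := ENNReal.mul_div_cancel (by simp) hK1
  calc (ν : Measure M).singularPart vol Set.univ
      ≤ (K : ℝ≥0∞) * δ + L := le_trans key (le_trans port hliminf)
    _ ≤ (ε : ℝ≥0∞) + L := add_le_add_left hKδ _
    _ = L + ε := add_comm _ _
end
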